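/- Let α, β, δ, γ be linear maps on real sequences such that the matrix operator T(ω,x) = (αω + βx, δω + γx) is bounded on Z₂, and suppose in addition that α restricts to a bounded operator on ℓ² (for every y ∈ ℓ², αy ∈ ℓ² and ‖αy‖₂ ≤ K‖y‖₂ for some constant K). Then δ is bounded from ℓ² to ℓ_f: there is C′ > 0 such that for every y ∈ ℓ², δy ∈ ℓ², KP(δy) ∈ ℓ², and ‖KP(δy)‖₂ + ‖δy‖₂ ≤ C′‖y‖₂. -/
import Mathlib


open scoped BigOperators

noncomputable section

/-- Real sequences. -/
abbrev RSeq : Type := ℕ → ℝ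

/-- Membership in ℓ². -/
def memL2 (x : RSeq) : Prop := Summable (fun n => (x n) ^ 2)

/-- The ℓ² norm. -/
noncomputable def l2norm (x : RSeq) : ℝ := Real.sqrt (∑' n, (x n) ^ 2)

/-- The Kalton–Peck map, defined coordinatewise.  (In Lean, `Real.log 0 = 0` and
division by zero is zero, so the conventions `0·log 0 = 0` and `KP 0 = 0` hold.) -/
noncomputable def KP (x : RSeq) : RSeq := fun n => 2 * x n * Real.log (|x n| / l2norm x)

/-- Membership in the Kalton–Peck space Z₂. -/
def memZ2 (u : RSeq × RSeq) : Prop := memL2 u.2 ∧ memL2 (u.1 - KP u.2)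

/-- The Z₂ quasinorm. -/
noncomputable def Z2norm (u : RSeq × RSeq) : ℝ := l2norm (u.1 - KP u.2) + l2norm u.2

/-- A map on pairs of sequences is bounded on Z₂. -/
def BoundedOnZ2 (T : RSeq × RSeq → RSeq × RSeq) : Prop :=
  (∀ u, memZ2 u → memZ2 (T u)) ∧ ∃ C : ℝ, ∀ u, memZ2 u → Z2norm (T u) ≤ C * Z2norm u

/-- The matrix operator associated to four linear maps on sequences. -/
def matOp (α β δ γ : RSeq →ₗ[ℝ] RSeq) : RSeq × RSeq → RSeq × RSeq :=
  fun u => (α u.1 + β u.2, δ u.1 + γ u.2)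

/-- Membership in the Orlicz space ℓ_f = Dom KP. -/
def memLf (x : RSeq) : Prop := memL2 x ∧ memL2 (KP x)

/-- The ℓ_f quasinorm. -/
noncomputable def lfNorm (x : RSeq) : ℝ := l2norm (KP x) + l2norm x

/-- Membership in ℓ_f* = Ran KP. -/
def memLfStar (ω : RSeq) : Prop := ∃ x : RSeq, memL2 x ∧ memL2 (ω - KP x)

/-- The ℓ_f* quasinorm. -/
noncomputable def lfStarNorm (ω : RSeq) : ℝ :=
  sInf {r : ℝ | ∃ x : RSeq, memL2 x ∧ memL2 (ω - KP x) ∧ r = l2norm (ω - KP x) + l2norm x}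

/-- A bounded map on Z₂ is strictly singular if every linear subspace of Z₂ on which it is
bounded below is finite dimensional. -/
def StrictlySingular (T : RSeq × RSeq → RSeq × RSeq) : Prop :=
  ∀ V : Submodule ℝ (RSeq × RSeq), (∀ v ∈ V, memZ2 v) →
    (∃ c > 0, ∀ v ∈ V, c * Z2norm v ≤ Z2norm (T v)) → FiniteDimensional ℝ V

/-- A set of sequences is totally bounded (relatively compact) for the ℓ² norm. -/
def l2TotallyBounded (A : Set RSeq) : Prop :=
  ∀ ε > 0, ∃ S : Set RSeq, S.Finite ∧
    ∀ a ∈ A, ∃ s ∈ S, memL2 (a - s) ∧ l2norm (a - s) < ε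

/-- A map on Z₂ is compact if the image of the unit ball is totally bounded for the
Z₂ quasinorm. -/
def CompactOnZ2 (T : RSeq × RSeq → RSeq × RSeq) : Prop :=
  ∀ ε > 0, ∃ S : Set (RSeq × RSeq), S.Finite ∧
    ∀ u, memZ2 u → Z2norm u ≤ 1 → ∃ s ∈ S, memZ2 (T u - s) ∧ Z2norm (T u - s) < ε


lemma sq_eq_rpow (x : RSeq) : (fun n => (x n)^2) = fun n => ‖x n‖ ^ (2 : ENNReal).toReal := by
  funext n
  rw [Real.norm_eq_abs, show ((2:ENNReal).toReal) = ((2:ℕ):ℝ) by norm_num,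
    Real.rpow_natCast, sq_abs]

lemma memL2_iff (x : RSeq) : memL2 x ↔ Memℓp x 2 := by
  rw [memℓp_gen_iff (by norm_num), memL2, sq_eq_rpow]

lemma l2norm_eq (f : lp (fun _ : ℕ => ℝ) 2) : l2norm (f : RSeq) = ‖f‖ := by
  rw [lp.norm_eq_tsum_rpow (by norm_num) f, l2norm, Real.sqrt_eq_rpow, sq_eq_rpow (f : RSeq)]
  norm_num

lemma l2norm_nonneg (x : RSeq) : 0 ≤ l2norm x := Real.sqrt_nonneg _

lemma l2norm_zero : l2norm 0 = 0 := by simp [l2norm]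

lemma l2norm_neg (x : RSeq) : l2norm (-x) = l2norm x := by simp [l2norm]

lemma l2norm_triangle {x y : RSeq} (hx : memL2 x) (hy : memL2 y) :
    l2norm (x + y) ≤ l2norm x + l2norm y := by
  rw [memL2_iff] at hx hy
  have e : x + y = ((⟨x, hx⟩ + ⟨y, hy⟩ : lp (fun _ : ℕ => ℝ) 2) : RSeq) := rfl
  rw [e, l2norm_eq]
  refine (norm_add_le _ _).trans ?_
  rw [← l2norm_eq, ← l2norm_eq]

lemma memL2_add {x y : RSeq} (hx : memL2 x) (hy : memL2 y) : memL2 (x + y) := by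
  rw [memL2_iff] at *; exact hx.add hy

lemma memL2_sub {x y : RSeq} (hx : memL2 x) (hy : memL2 y) : memL2 (x - y) := by
  rw [memL2_iff] at *; exact hx.sub hy

lemma memL2_neg {x : RSeq} (hx : memL2 x) : memL2 (-x) := by
  rw [memL2_iff] at *; exact hx.neg

lemma l2norm_sub_le {x y : RSeq} (hx : memL2 x) (hy : memL2 y) :
    l2norm (x - y) ≤ l2norm x + l2norm y := by
  rw [sub_eq_add_neg]
  exact (l2norm_triangle hx (memL2_neg hy)).trans (by rw [l2norm_neg])

lemma KP_zero : KP (0 : RSeq) = 0 := by funext n; simp [KP]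

/-- If the matrix operator is bounded on Z₂ and α restricts to a bounded
operator on ℓ², then δ is bounded from ℓ² to ℓ_f. -/
theorem stmt_7 (α β δ γ : RSeq →ₗ[ℝ] RSeq)
    (hT : BoundedOnZ2 (matOp α β δ γ))
    (hα : ∃ K : ℝ, ∀ y : RSeq, memL2 y → memL2 (α y) ∧ l2norm (α y) ≤ K * l2norm y) :
    ∃ C > (0 : ℝ), ∀ y : RSeq, memL2 y →
      memL2 (δ y) ∧ memL2 (KP (δ y)) ∧
      l2norm (KP (δ y)) + l2norm (δ y) ≤ C * l2norm y := by
  obtain ⟨K, hK⟩ := hα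
  obtain ⟨hmem, C, hC⟩ := hT
  refine ⟨|C| + |K| + 1, by positivity, ?_⟩
  intro y hy
  have hmemL2zero : memL2 (0 : RSeq) := by simpa [memL2] using summable_zero
  have hu : memZ2 (y, (0 : RSeq)) := by
    refine ⟨hmemL2zero, ?_⟩
    show memL2 (y - KP 0)
    rw [KP_zero, sub_zero]; exact hy
  have e : matOp α β δ γ (y, (0 : RSeq)) = (α y, δ y) := by
    simp [matOp]
  have hTu := hmem _ hu
  rw [e] at hTu
  obtain ⟨hδy, hdiff⟩ := hTu
  have hbound := hC _ hu
  rw [e] at hbound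
  have hZu : Z2norm (y, (0 : RSeq)) = l2norm y := by
    simp [Z2norm, KP_zero, l2norm_zero]
  have hZT : Z2norm (α y, δ y) = l2norm (α y - KP (δ y)) + l2norm (δ y) := rfl
  rw [hZu, hZT] at hbound
  have hay := hK y hy
  have hdiff' : memL2 (α y - KP (δ y)) := hdiff
  have hKPmem : memL2 (KP (δ y)) := by
    have hrw : KP (δ y) = α y - (α y - KP (δ y)) := (sub_sub_cancel _ _).symm
    rw [hrw]; exact memL2_sub hay.1 hdiff'
  refine ⟨hδy, hKPmem, ?_⟩
  have htri : l2norm (KP (δ y)) ≤ l2norm (α y) + l2norm (α y - KP (δ y)) := by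
    have hrw : KP (δ y) = α y - (α y - KP (δ y)) := (sub_sub_cancel _ _).symm
    nth_rewrite 1 [hrw]; exact l2norm_sub_le hay.1 hdiff'
  have h1 : K * l2norm y ≤ |K| * l2norm y :=
    mul_le_mul_of_nonneg_right (le_abs_self K) (l2norm_nonneg y)
  have h2 : C * l2norm y ≤ |C| * l2norm y :=
    mul_le_mul_of_nonneg_right (le_abs_self C) (l2norm_nonneg y)
  have h3 := l2norm_nonneg y
  have h4 := hay.2
  nlinarith [l2norm_nonneg (δ y), l2norm_nonneg (α y - KP (δ y))]
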